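/- If Γ is a metric ribbon graph homeomorphic to the circle S¹ satisfying the π-tête-à-tête property, then the induced homeomorphism σ_Γ is either the identity or the rotation by half the total length, and the total length of Γ is 2π/n for some positive integer n. -/
import Mathlib


/-!
STATEMENT 6. If `Γ` is a metric ribbon graph homeomorphic to the circle `S¹`
satisfying the `π`-tête-à-tête property, then the induced homeomorphism `σ_Γ`
is either the identity or the rotation by half the total length, and the total
length of `Γ` is `2π/n` for some positive integer `n`.

A metric circle of total length `L` is the quotient `ℝ/Lℤ = AddCircle L`; the
two safe walks from `p` are `t ↦ p + t` and `t ↦ p - t`, so the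
`π`-tête-à-tête property says `p + π = p - π` for every (non-vertex, hence by
continuity every) point `p`, and `σ_Γ(p) = p + π`. -/
theorem tat_circle (L : ℝ) (hL : 0 < L)
    (htat : ∀ p : AddCircle L, p + ((Real.pi : ℝ) : AddCircle L)
      = p - ((Real.pi : ℝ) : AddCircle L)) :
    -- the total length is 2π/n for some positive integer n
    (∃ n : ℕ, 0 < n ∧ L = 2 * Real.pi / n) ∧
    -- σ_Γ is the identity or the rotation by half the total length
    ((∀ p : AddCircle L, p + ((Real.pi : ℝ) : AddCircle L) = p) ∨
     (∀ p : AddCircle L, p + ((Real.pi : ℝ) : AddCircle L)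
        = p + ((L / 2 : ℝ) : AddCircle L))) := by
  have h0 := htat 0
  simp only [zero_add, zero_sub] at h0
  have h2 : ((2 * Real.pi : ℝ) : AddCircle L) = 0 := by
    have heq : (2 * Real.pi : ℝ) = Real.pi + Real.pi := by ring
    rw [heq, AddCircle.coe_add]; nth_rewrite 2 [h0]; exact add_neg_cancel _
  obtain ⟨n, hn⟩ := (AddCircle.coe_eq_zero_iff L).mp h2
  have hnL : (n : ℝ) * L = 2 * Real.pi := by
    simpa [zsmul_eq_mul] using hn
  have hnpos : 0 < n := by
    by_contra h
    push_neg at h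
    have : (n : ℝ) * L ≤ 0 :=
      mul_nonpos_of_nonpos_of_nonneg (by exact_mod_cast h) hL.le
    nlinarith [Real.pi_pos]
  constructor
  · refine ⟨n.toNat, by omega, ?_⟩
    have hc : ((n.toNat : ℕ) : ℝ) = (n : ℝ) := by
      exact_mod_cast congrArg (fun z : ℤ => (z : ℝ)) (Int.toNat_of_nonneg hnpos.le)
    rw [hc, eq_div_iff (by exact_mod_cast hnpos.ne' : (n:ℝ) ≠ 0)]
    linarith [hnL]
  · rcases Int.even_or_odd n with ⟨m, hm⟩ | ⟨m, hm⟩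
    · left
      intro p
      have hπc : ((Real.pi : ℝ) : AddCircle L) = 0 := by
        have hπ : Real.pi = (m : ℝ) * L := by
          have hc : (n : ℝ) = (m : ℝ) + (m : ℝ) := by exact_mod_cast hm
          nlinarith [hnL]
        rw [hπ]
        exact (AddCircle.coe_eq_zero_iff L).mpr ⟨m, by simp [zsmul_eq_mul]⟩
      rw [hπc, add_zero]
    · right
      intro p
      have hπ : Real.pi = (m : ℝ) * L + L / 2 := by
        have hc : (n : ℝ) = 2 * (m : ℝ) + 1 := by exact_mod_cast hm
        nlinarith [hnL]
      have hz : (((m : ℝ) * L : ℝ) : AddCircle L) = 0 :=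
        (AddCircle.coe_eq_zero_iff L).mpr ⟨m, by simp [zsmul_eq_mul]⟩
      congr 1
      rw [hπ, AddCircle.coe_add, hz, zero_add]
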